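/- For every natural number n ≥ 0 and every real x, Q_{n+1}(x) = ∑_{m : n ≤ 3m and 2m ≤ n} g̃_{m, n−2m} · m! · x^{3m−n}/(3m−n)!, where the sum is over all integers m with n/3 ≤ m ≤ n/2. -/

import Mathlib

open Polynomial

/-- The pair of polynomial families `(P n, Q n)` defined by the recurrence
`P_{n+1} = P_n' + X·Q_n`, `Q_{n+1} = P_n + Q_n'` with `P_0 = 1`, `Q_0 = 0`. -/
noncomputable def airyPQ : ℕ → Polynomial ℝ × Polynomial ℝ
  | 0 => (1, 0)
  | n + 1 =>
      ((airyPQ n).1.derivative + X * (airyPQ n).2,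
       (airyPQ n).1 + (airyPQ n).2.derivative)

noncomputable def airyP (n : ℕ) : Polynomial ℝ := (airyPQ n).1
noncomputable def airyQ (n : ℕ) : Polynomial ℝ := (airyPQ n).2

/-- `g̃_{m,k}`: the `k`-th Taylor coefficient at `0` of `(1 − t + t²/3)^{−(m+1)}`. -/
noncomputable def gTilde (m k : ℕ) : ℝ :=
  iteratedDeriv k (fun t : ℝ => (1 - t + t ^ 2 / 3) ^ (-(m + 1 : ℤ))) 0 /
    (Nat.factorial k : ℝ)

namespace AiryAux

noncomputable def f (m : ℕ) : ℝ → ℝ := fun t : ℝ => (1 - t + t ^ 2 / 3) ^ (-(m + 1 : ℤ))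

lemma q_pos (t : ℝ) : 0 < 1 - t + t ^ 2 / 3 := by nlinarith [sq_nonneg (t - 3/2)]

lemma q_ne (t : ℝ) : 1 - t + t ^ 2 / 3 ≠ 0 := (q_pos t).ne'

lemma f_eq (m : ℕ) : f m = fun t => ((1 - t + t ^ 2 / 3) ^ (m + 1 : ℕ))⁻¹ := by
  funext t
  rw [f, ← zpow_natCast (1 - t + t ^ 2 / 3) (m + 1), ← zpow_neg]
  push_cast
  ring_nf

lemma contDiff_q : ContDiff ℝ ⊤ (fun t : ℝ => 1 - t + t ^ 2 / 3) := by
  exact (contDiff_const.sub contDiff_id).add ((contDiff_id.pow 2).div_const 3)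

lemma contDiff_f (m : ℕ) : ContDiff ℝ ⊤ (f m) := by
  rw [f_eq]
  exact (contDiff_q.pow (m + 1)).inv (fun t => pow_ne_zero _ (q_ne t))

lemma hasDerivAt_f (m : ℕ) (t : ℝ) :
    HasDerivAt (f m) (((m : ℝ) + 1) * (1 - 2 * t / 3) * f (m + 1) t) t := by
  have hq : HasDerivAt (fun t : ℝ => 1 - t + t ^ 2 / 3) (-1 + 2 * t / 3) t := by
    have h1 : HasDerivAt (fun t : ℝ => 1 - t + t ^ 2 / 3) (0 - 1 + (2 * t ^ 1) / 3) t := by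
      exact (((hasDerivAt_const t 1).sub (hasDerivAt_id t)).add
        ((hasDerivAt_pow 2 t).div_const 3))
    convert h1 using 1; ring
  have h := (hasDerivAt_zpow (-(m + 1 : ℤ)) (1 - t + t ^ 2 / 3) (Or.inl (q_ne t))).comp t hq
  refine HasDerivAt.congr_deriv (f := f m) h ?_
  symm
  show ((m : ℝ) + 1) * (1 - 2 * t / 3) * (1 - t + t ^ 2 / 3) ^ (-((m:ℤ) + 1 + 1)) = _
  have he : (-(m + 1 : ℤ)) - 1 = -((m : ℤ) + 1 + 1) := by ring
  rw [he]
  push_cast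
  ring

end AiryAux

namespace AiryAux

variable {g h : ℝ → ℝ}

lemma itd_diff (hg : ContDiff ℝ ⊤ g) (k : ℕ) : Differentiable ℝ (iteratedDeriv k g) :=
  hg.differentiable_iteratedDeriv k (by exact_mod_cast lt_top_iff_ne_top.2 (by simp))

lemma itd_add (hg : ContDiff ℝ ⊤ g) (hh : ContDiff ℝ ⊤ h) (k : ℕ) (x : ℝ) :
    iteratedDeriv k (fun t => g t + h t) x = iteratedDeriv k g x + iteratedDeriv k h x := by
  rw [← iteratedDerivWithin_univ, ← iteratedDerivWithin_univ, ← iteratedDerivWithin_univ]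
  exact iteratedDerivWithin_add (Set.mem_univ x) uniqueDiffOn_univ
    (hg.of_le le_top).contDiffWithinAt (hh.of_le le_top).contDiffWithinAt

lemma itd_sub (hg : ContDiff ℝ ⊤ g) (hh : ContDiff ℝ ⊤ h) (k : ℕ) (x : ℝ) :
    iteratedDeriv k (fun t => g t - h t) x = iteratedDeriv k g x - iteratedDeriv k h x := by
  rw [← iteratedDerivWithin_univ, ← iteratedDerivWithin_univ, ← iteratedDerivWithin_univ]
  exact iteratedDerivWithin_sub (Set.mem_univ x) uniqueDiffOn_univ
    (hg.of_le le_top).contDiffWithinAt (hh.of_le le_top).contDiffWithinAt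

lemma itd_cmul (hg : ContDiff ℝ ⊤ g) (c : ℝ) (k : ℕ) (x : ℝ) :
    iteratedDeriv k (fun t => c * g t) x = c * iteratedDeriv k g x := by
  rw [← iteratedDerivWithin_univ, ← iteratedDerivWithin_univ]
  exact iteratedDerivWithin_const_mul (Set.mem_univ x) uniqueDiffOn_univ c
    (hg.of_le le_top).contDiffWithinAt

lemma itd_tmul (hg : ContDiff ℝ ⊤ g) (k : ℕ) (x : ℝ) :
    iteratedDeriv (k + 1) (fun t => t * g t) x
      = x * iteratedDeriv (k + 1) g x + (k + 1 : ℝ) * iteratedDeriv k g x := by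
  induction k generalizing x with
  | zero =>
    rw [iteratedDeriv_one, iteratedDeriv_one, iteratedDeriv_zero]
    rw [deriv_fun_mul differentiableAt_fun_id (hg.differentiable (by simp)).differentiableAt]
    simp [mul_comm]; ring
  | succ k ih =>
    have hfun : iteratedDeriv (k + 1) (fun t => t * g t)
        = fun y => y * iteratedDeriv (k + 1) g y + (k + 1 : ℝ) * iteratedDeriv k g y :=
      funext fun y => ih y
    rw [iteratedDeriv_succ, hfun]
    have d1 : DifferentiableAt ℝ (fun y => y * iteratedDeriv (k + 1) g y) x :=
      differentiableAt_id.mul ((itd_diff hg (k + 1)) x)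
    have d2 : DifferentiableAt ℝ (fun y => (k + 1 : ℝ) * iteratedDeriv k g y) x :=
      ((itd_diff hg k) x).const_mul _
    rw [deriv_fun_add d1 d2]
    rw [deriv_fun_mul differentiableAt_fun_id ((itd_diff hg (k + 1)) x)]
    rw [deriv_const_mul _ ((itd_diff hg k) x)]
    rw [← iteratedDeriv_succ, ← iteratedDeriv_succ]
    simp only [deriv_id'']
    push_cast
    ring

end AiryAux

namespace AiryAux

lemma deriv_f_eq (m : ℕ) :
    deriv (f m) = fun t => ((m : ℝ) + 1) * (1 - 2 * t / 3) * f (m + 1) t :=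
  funext fun t => (hasDerivAt_f m t).deriv

lemma contDiff_deriv_f (m : ℕ) : ContDiff ℝ ⊤ (deriv (f m)) := by
  rw [deriv_f_eq m]
  exact (contDiff_const.mul (contDiff_const.sub
    ((contDiff_const.mul contDiff_id).div_const 3))).mul (contDiff_f (m + 1))

lemma f_zero (m : ℕ) : f m 0 = 1 := by
  simp [f]

lemma f_step (m : ℕ) (t : ℝ) : f m t = (1 - t + t ^ 2 / 3) * f (m + 1) t := by
  show (1 - t + t ^ 2 / 3) ^ (-(m + 1 : ℤ)) = (1 - t + t ^ 2 / 3) * (1 - t + t ^ 2 / 3) ^ (-((m : ℤ) + 1 + 1))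
  have he : (-(m + 1 : ℤ)) = (-((m : ℤ) + 1 + 1)) + 1 := by ring
  rw [he, zpow_add_one₀ (q_ne t), mul_comm]

lemma keyD (M j : ℕ) :
    iteratedDeriv (j + 2) (f (M + 1)) 0 - 2 * ((j : ℝ) + 2) * iteratedDeriv (j + 1) (f (M + 1)) 0
      + ((j : ℝ) + 2) * ((j : ℝ) + 1) * iteratedDeriv j (f (M + 1)) 0
    = iteratedDeriv (j + 2) (f M) 0
      - (((j : ℝ) + 2) / ((M : ℝ) + 1)) * iteratedDeriv (j + 2) (f M) 0 := by
  have s1 := contDiff_f (M + 1)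
  have s2 : ContDiff ℝ ⊤ (fun t : ℝ => t * f (M + 1) t) := contDiff_id.mul s1
  have s2' : ContDiff ℝ ⊤ (fun t : ℝ => 2 * (t * f (M + 1) t)) := contDiff_const.mul s2
  have s3 : ContDiff ℝ ⊤ (fun t : ℝ => t ^ 2 * f (M + 1) t) := (contDiff_id.pow 2).mul s1
  have s12 : ContDiff ℝ ⊤ (fun t : ℝ => f (M + 1) t - 2 * (t * f (M + 1) t)) := s1.sub s2'
  have hdM := contDiff_deriv_f M
  have s4 : ContDiff ℝ ⊤ (fun t : ℝ => t * deriv (f M) t) := contDiff_id.mul hdM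
  have s4' : ContDiff ℝ ⊤ (fun t : ℝ => (1 / ((M : ℝ) + 1)) * (t * deriv (f M) t)) :=
    contDiff_const.mul s4
  have hM : (M : ℝ) + 1 ≠ 0 := by positivity
  have hFun : (fun t : ℝ => f (M + 1) t - 2 * (t * f (M + 1) t) + t ^ 2 * f (M + 1) t)
      = (fun t : ℝ => f M t - (1 / ((M : ℝ) + 1)) * (t * deriv (f M) t)) := by
    funext t
    simp only [deriv_f_eq M]
    rw [f_step M t]
    field_simp
    ring
  have L : iteratedDeriv (j + 2)
      (fun t : ℝ => f (M + 1) t - 2 * (t * f (M + 1) t) + t ^ 2 * f (M + 1) t) 0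
      = iteratedDeriv (j + 2) (f (M + 1)) 0
        - 2 * ((j : ℝ) + 2) * iteratedDeriv (j + 1) (f (M + 1)) 0
        + ((j : ℝ) + 2) * ((j : ℝ) + 1) * iteratedDeriv j (f (M + 1)) 0 := by
    rw [itd_add s12 s3, itd_sub s1 s2', itd_cmul s2 2]
    have h2 : iteratedDeriv (j + 2) (fun t : ℝ => t ^ 2 * f (M + 1) t) 0
        = ((j : ℝ) + 2) * ((j : ℝ) + 1) * iteratedDeriv j (f (M + 1)) 0 := by
      have e : (fun t : ℝ => t ^ 2 * f (M + 1) t) = (fun t : ℝ => t * (t * f (M + 1) t)) := by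
        funext t; ring
      rw [e, itd_tmul s2 (j + 1) 0, itd_tmul s1 j 0]; push_cast; ring
    rw [h2, itd_tmul s1 (j + 1) 0]; push_cast; ring
  have R : iteratedDeriv (j + 2)
      (fun t : ℝ => f M t - (1 / ((M : ℝ) + 1)) * (t * deriv (f M) t)) 0
      = iteratedDeriv (j + 2) (f M) 0
        - (((j : ℝ) + 2) / ((M : ℝ) + 1)) * iteratedDeriv (j + 2) (f M) 0 := by
    rw [itd_sub (contDiff_f M) s4', itd_cmul s4, itd_tmul hdM (j + 1) 0]
    simp only [zero_mul, zero_add]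
    rw [← iteratedDeriv_succ']
    push_cast
    ring
  rw [← L, hFun, R]

lemma gTilde_eq (m k : ℕ) : gTilde m k = iteratedDeriv k (f m) 0 / (k.factorial : ℝ) := rfl

lemma g0 (m : ℕ) : gTilde m 0 = 1 := by
  rw [gTilde_eq, iteratedDeriv_zero, f_zero]
  norm_num

lemma g1 (m : ℕ) : gTilde m 1 = (m : ℝ) + 1 := by
  rw [gTilde_eq, iteratedDeriv_one, (hasDerivAt_f m 0).deriv, f_zero]
  norm_num

lemma gRec (M j : ℕ) :
    gTilde (M + 1) (j + 2) - 2 * gTilde (M + 1) (j + 1) + gTilde (M + 1) j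
      = (1 - ((j : ℝ) + 2) / ((M : ℝ) + 1)) * gTilde M (j + 2) := by
  have h := keyD M j
  rw [gTilde_eq, gTilde_eq, gTilde_eq, gTilde_eq]
  have h2 : (((j + 2).factorial : ℝ)) = ((j : ℝ) + 2) * ((j : ℝ) + 1) * (j.factorial : ℝ) := by
    rw [show j + 2 = (j + 1) + 1 from rfl, Nat.factorial_succ, Nat.factorial_succ]
    push_cast; ring
  have h1 : (((j + 1).factorial : ℝ)) = ((j : ℝ) + 1) * (j.factorial : ℝ) := by
    rw [Nat.factorial_succ]; push_cast; ring
  have hfj : (j.factorial : ℝ) ≠ 0 := Nat.cast_ne_zero.2 j.factorial_ne_zero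
  have hM : (M : ℝ) + 1 ≠ 0 := by positivity
  have hj1 : (j : ℝ) + 1 ≠ 0 := by positivity
  have hj2 : (j : ℝ) + 2 ≠ 0 := by positivity
  set a := iteratedDeriv (j + 2) (f (M + 1)) 0 with ha
  set b := iteratedDeriv (j + 1) (f (M + 1)) 0 with hb
  set c := iteratedDeriv j (f (M + 1)) 0 with hc
  set d := iteratedDeriv (j + 2) (f M) 0 with hd
  have e1 : a / ((j + 2).factorial : ℝ) - 2 * (b / ((j + 1).factorial : ℝ))
      + c / (j.factorial : ℝ)
      = (a - 2 * ((j : ℝ) + 2) * b + ((j : ℝ) + 2) * ((j : ℝ) + 1) * c)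
        / ((j + 2).factorial : ℝ) := by
    rw [h2, h1]
    field_simp
  rw [e1, h, h2]
  field_simp

end AiryAux

namespace AiryAux

noncomputable def A (n m : ℕ) : ℝ :=
  if n ≤ 3 * m ∧ 2 * m ≤ n then
    gTilde m (n - 2 * m) * (Nat.factorial m : ℝ) / (Nat.factorial (3 * m - n) : ℝ)
  else 0

lemma A_eval {n m k D : ℕ} (h1 : n ≤ 3 * m) (h2 : 2 * m ≤ n) (hk : n - 2 * m = k)
    (hD : 3 * m - n = D) :
    A n m = gTilde m k * (Nat.factorial m : ℝ) / (Nat.factorial D : ℝ) := by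
  rw [A, if_pos ⟨h1, h2⟩, hk, hD]

lemma A_zero {n m : ℕ} (h : ¬(n ≤ 3 * m ∧ 2 * m ≤ n)) : A n m = 0 := if_neg h

lemma fact_ne (k : ℕ) : (Nat.factorial k : ℝ) ≠ 0 := Nat.cast_ne_zero.2 k.factorial_ne_zero

lemma algebra_step (a b c g Mr er F E : ℝ) (hE : E ≠ 0)
    (he1 : er + 1 ≠ 0) (he2 : er + 2 ≠ 0) (he3 : er + 3 ≠ 0)
    (h : (Mr + 1) * (a - 2 * b + c) = (er + 1) * g) :
    a * ((Mr + 1) * F) / ((er + 1) * E)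
      = 2 * (b * ((Mr + 1) * F) / ((er + 2) * (er + 1) * E) * (er + 2))
        - c * ((Mr + 1) * F) / ((er + 3) * (er + 2) * (er + 1) * E) * (er + 3) * (er + 2)
        + g * F / E := by
  have key : a * ((Mr + 1) * F) = 2 * (b * ((Mr + 1) * F)) - c * ((Mr + 1) * F)
      + (er + 1) * (g * F) := by linear_combination F * h
  rw [div_eq_iff (by exact mul_ne_zero he1 hE : (er + 1) * E ≠ 0), key]
  field_simp

lemma star (n m : ℕ) :
    A (n + 2) m = 2 * (A (n + 1) m * ((3 * m - (n + 1) : ℕ) : ℝ))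
      - A n m * ((3 * m - n : ℕ) : ℝ) * ((3 * m - n - 1 : ℕ) : ℝ)
      + (if m = 0 then 0 else A n (m - 1)) := by
  rcases Nat.eq_zero_or_pos m with hm0 | hm
  · subst hm0
    rw [if_pos rfl, A_zero (by omega), A_zero (by omega)]
    rw [show 3 * 0 - n = 0 from by omega]
    norm_num
  · rw [if_neg (by omega : ¬ m = 0)]
    obtain ⟨M, rfl⟩ : ∃ M, m = M + 1 := ⟨m - 1, by omega⟩
    by_cases hc : 2 * (M + 1) ≤ n + 2
    · by_cases hb : n + 2 ≤ 3 * (M + 1)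
      · -- main region
        rcases Nat.lt_or_ge n (2 * (M + 1)) with hk | hk
        · rcases (by omega : n + 1 = 2 * (M + 1) ∨ n + 2 = 2 * (M + 1)) with h | h
          · -- k = -1 : n = 2M+1
            rw [A_eval (by omega) (by omega) (by omega : n + 2 - 2 * (M + 1) = 1)
                  (by omega : 3 * (M + 1) - (n + 2) = M),
                A_eval (by omega) (by omega) (by omega : n + 1 - 2 * (M + 1) = 0)
                  (by omega : 3 * (M + 1) - (n + 1) = M + 1),
                A_zero (by omega),
                show 3 * (M + 1) - (n + 1) = M + 1 from by omega,
                show M + 1 - 1 = M from by omega, g0, g1]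
            rcases Nat.eq_zero_or_pos M with hM0 | hM1
            · subst hM0
              rw [A_zero (by omega)]
              norm_num [Nat.factorial]
            · obtain ⟨q, rfl⟩ : ∃ q, M = q + 1 := ⟨M - 1, by omega⟩
              rw [A_eval (by omega) (by omega) (by omega : n - 2 * (q + 1) = 1)
                    (by omega : 3 * (q + 1) - n = q), g1]
              have c1 : ((Nat.factorial (q + 1 + 1) : ℝ)) =
                  ((q : ℝ) + 2) * (Nat.factorial (q + 1) : ℝ) := by
                rw [Nat.factorial_succ]; push_cast; ring
              have c2 : ((Nat.factorial (q + 1) : ℝ)) = ((q : ℝ) + 1) * (Nat.factorial q : ℝ) := by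
                rw [Nat.factorial_succ]; push_cast; ring
              rw [c1, c2]
              have h1 := fact_ne q
              have h2 := fact_ne (q + 1)
              field_simp
              push_cast
              ring
          · -- k = -2 : n = 2M
            rw [A_eval (by omega) (by omega) (by omega : n + 2 - 2 * (M + 1) = 0)
                  (by omega : 3 * (M + 1) - (n + 2) = M + 1),
                A_zero (by omega), A_zero (by omega),
                show M + 1 - 1 = M from by omega,
                A_eval (by omega) (by omega) (by omega : n - 2 * M = 0)
                  (by omega : 3 * M - n = M), g0, g0]
            have h1 := fact_ne M
            have h2 := fact_ne (M + 1)
            field_simp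
            ring
        · -- k ≥ 0 region
          obtain ⟨j, hj⟩ : ∃ j, n = 2 * (M + 1) + j := ⟨n - 2 * (M + 1), by omega⟩
          obtain ⟨d, hd⟩ : ∃ d, M + 1 = j + 2 + d := ⟨M + 1 - (j + 2), by omega⟩
          have hrec := gRec M j
          have hM : (M : ℝ) + 1 ≠ 0 := by positivity
          have hMd : (M : ℝ) + 1 = (j : ℝ) + 2 + d := by exact_mod_cast hd
          have hrec2 : ((M : ℝ) + 1) * (gTilde (M + 1) (j + 2) - 2 * gTilde (M + 1) (j + 1)
              + gTilde (M + 1) j) = ((d : ℝ)) * gTilde M (j + 2) := by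
            have h1 : (1 - ((j : ℝ) + 2) / ((M : ℝ) + 1)) * ((M : ℝ) + 1) = (d : ℝ) := by
              rw [sub_mul, div_mul_cancel₀ _ hM, hMd]; ring
            rw [hrec]
            calc ((M : ℝ) + 1) * ((1 - ((j : ℝ) + 2) / ((M : ℝ) + 1)) * gTilde M (j + 2))
                = ((1 - ((j : ℝ) + 2) / ((M : ℝ) + 1)) * ((M : ℝ) + 1)) * gTilde M (j + 2) := by
                  ring
              _ = _ := by rw [h1]
          rcases Nat.eq_zero_or_pos d with hd0 | hd1
          · subst hd0
            rw [A_eval (by omega) (by omega) (by omega : n + 2 - 2 * (M + 1) = j + 2)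
                  (by omega : 3 * (M + 1) - (n + 2) = 0),
                A_eval (by omega) (by omega) (by omega : n + 1 - 2 * (M + 1) = j + 1)
                  (by omega : 3 * (M + 1) - (n + 1) = 1),
                A_eval (by omega) (by omega) (by omega : n - 2 * (M + 1) = j)
                  (by omega : 3 * (M + 1) - n = 2),
                show 3 * (M + 1) - (n + 1) = 1 from by omega,
                show 3 * (M + 1) - n = 2 from by omega,
                show M + 1 - 1 = M from by omega,
                A_zero (by omega)]
            have hf := fact_ne (M + 1)
            have ha : gTilde (M + 1) (j + 2) = 2 * gTilde (M + 1) (j + 1) - gTilde (M + 1) j := by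
              have h := hrec2
              rw [Nat.cast_zero, zero_mul] at h
              rcases mul_eq_zero.mp h with h' | h'
              · exact absurd h' hM
              · linarith
            rw [ha]
            norm_num [Nat.factorial]
            ring
          · obtain ⟨e, rfl⟩ : ∃ e, d = e + 1 := ⟨d - 1, by omega⟩
            rw [A_eval (by omega) (by omega) (by omega : n + 2 - 2 * (M + 1) = j + 2)
                  (by omega : 3 * (M + 1) - (n + 2) = e + 1),
                A_eval (by omega) (by omega) (by omega : n + 1 - 2 * (M + 1) = j + 1)
                  (by omega : 3 * (M + 1) - (n + 1) = e + 2),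
                A_eval (by omega) (by omega) (by omega : n - 2 * (M + 1) = j)
                  (by omega : 3 * (M + 1) - n = e + 3),
                show 3 * (M + 1) - (n + 1) = e + 2 from by omega,
                show 3 * (M + 1) - n = e + 3 from by omega,
                show e + 3 - 1 = e + 2 from by omega,
                show M + 1 - 1 = M from by omega,
                A_eval (by omega) (by omega) (by omega : n - 2 * M = j + 2)
                  (by omega : 3 * M - n = e)]
            have c1 : ((Nat.factorial (e + 1) : ℝ)) = ((e : ℝ) + 1) * (Nat.factorial e : ℝ) := by
              rw [Nat.factorial_succ]; push_cast; ring
            have c2 : ((Nat.factorial (e + 2) : ℝ)) =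
                ((e : ℝ) + 2) * ((e : ℝ) + 1) * (Nat.factorial e : ℝ) := by
              rw [show e + 2 = (e + 1) + 1 from rfl, Nat.factorial_succ, Nat.factorial_succ]
              push_cast; ring
            have c3 : ((Nat.factorial (e + 3) : ℝ)) =
                ((e : ℝ) + 3) * ((e : ℝ) + 2) * ((e : ℝ) + 1) * (Nat.factorial e : ℝ) := by
              rw [show e + 3 = (e + 1 + 1) + 1 from rfl, Nat.factorial_succ, Nat.factorial_succ,
                Nat.factorial_succ]
              push_cast; ring
            have cm : ((Nat.factorial (M + 1) : ℝ)) = ((M : ℝ) + 1) * (Nat.factorial M : ℝ) := by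
              rw [Nat.factorial_succ]; push_cast; ring
            have hMd : (M : ℝ) + 1 = (j : ℝ) + 2 + ((e : ℝ) + 1) := by
              have : (M : ℝ) + 1 = ((j + 2 + (e + 1) : ℕ) : ℝ) := by exact_mod_cast hd
              rw [this]; push_cast; ring
            rw [c1, c2, c3, cm]
            have he1 : (e : ℝ) + 1 ≠ 0 := by positivity
            have he2 : (e : ℝ) + 2 ≠ 0 := by positivity
            have he3 : (e : ℝ) + 3 ≠ 0 := by positivity
            push_cast at hrec2 ⊢
            exact algebra_step _ _ _ _ _ _ _ _ (fact_ne e) he1 he2 he3 hrec2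
      · -- region (d): 3M+3 < n+2
        rw [A_zero (by omega)]
        rcases (by omega : 3 * (M + 1) = n + 1 ∨ 3 * (M + 1) = n ∨ 3 * (M + 1) < n) with h | h | h
        · rw [show 3 * (M + 1) - (n + 1) = 0 from by omega,
              show 3 * (M + 1) - n - 1 = 0 from by omega,
              show M + 1 - 1 = M from by omega, A_zero (by omega : ¬(n ≤ 3 * M ∧ 2 * M ≤ n))]
          norm_num
        · rw [A_zero (by omega : ¬(n + 1 ≤ 3 * (M + 1) ∧ 2 * (M + 1) ≤ n + 1)),
              show 3 * (M + 1) - n = 0 from by omega,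
              show M + 1 - 1 = M from by omega, A_zero (by omega : ¬(n ≤ 3 * M ∧ 2 * M ≤ n))]
          norm_num
        · rw [A_zero (by omega : ¬(n + 1 ≤ 3 * (M + 1) ∧ 2 * (M + 1) ≤ n + 1)),
              A_zero (by omega : ¬(n ≤ 3 * (M + 1) ∧ 2 * (M + 1) ≤ n)),
              show M + 1 - 1 = M from by omega, A_zero (by omega : ¬(n ≤ 3 * M ∧ 2 * M ≤ n))]
          norm_num
    · -- region (e): 2(M+1) > n+2
      rw [A_zero (by omega), A_zero (by omega), A_zero (by omega),
          show M + 1 - 1 = M from by omega, A_zero (by omega : ¬(n ≤ 3 * M ∧ 2 * M ≤ n))]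
      norm_num

end AiryAux

namespace AiryAux

open Polynomial

noncomputable def Rp (n : ℕ) : Polynomial ℝ :=
  ∑ m ∈ Finset.range (n + 1), C (A n m) * X ^ (3 * m - n)

lemma Rp_big (n N : ℕ) (hN : n + 1 ≤ N) :
    Rp n = ∑ m ∈ Finset.range N, C (A n m) * X ^ (3 * m - n) := by
  rw [Rp]
  refine Finset.sum_subset (Finset.range_subset_range.2 hN) fun m _ hm => ?_
  have : n + 1 ≤ m := by simpa using hm
  rw [A_zero (by omega), map_zero, zero_mul]

lemma airyQ_succ (n : ℕ) : airyQ (n + 1) = airyP n + derivative (airyQ n) := rfl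

lemma airyP_succ (n : ℕ) : airyP (n + 1) = derivative (airyP n) + X * airyQ n := rfl

lemma Qrec (n : ℕ) : airyQ (n + 3) = 2 * derivative (airyQ (n + 2))
    - derivative (derivative (airyQ (n + 1))) + X * airyQ (n + 1) := by
  have hP : airyP (n + 1) = airyQ (n + 2) - derivative (airyQ (n + 1)) := by
    have h := airyQ_succ (n + 1)
    show airyP (n + 1) = airyQ (n + 1 + 1) - derivative (airyQ (n + 1))
    rw [h]; ring
  have h3 : airyQ (n + 3) = airyP (n + 2) + derivative (airyQ (n + 2)) := airyQ_succ (n + 2)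
  have h4 : airyP (n + 2) = derivative (airyP (n + 1)) + X * airyQ (n + 1) := airyP_succ (n + 1)
  rw [h3, h4, hP, map_sub]
  ring

lemma Rp_rec (n : ℕ) :
    Rp (n + 2) = 2 * derivative (Rp (n + 1)) - derivative (derivative (Rp n)) + X * Rp n := by
  have h1 : derivative (Rp (n + 1))
      = ∑ m ∈ Finset.range (n + 3),
          C (A (n + 1) m * ((3 * m - (n + 1) : ℕ) : ℝ)) * X ^ (3 * m - (n + 2)) := by
    rw [Rp_big (n + 1) (n + 3) (by omega), derivative_sum]
    refine Finset.sum_congr rfl fun m _ => ?_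
    rw [derivative_C_mul_X_pow, show 3 * m - (n + 1) - 1 = 3 * m - (n + 2) from by omega]
  have h2 : derivative (derivative (Rp n))
      = ∑ m ∈ Finset.range (n + 3),
          C (A n m * ((3 * m - n : ℕ) : ℝ) * ((3 * m - n - 1 : ℕ) : ℝ))
            * X ^ (3 * m - (n + 2)) := by
    have h2a : derivative (Rp n)
        = ∑ m ∈ Finset.range (n + 3), C (A n m * ((3 * m - n : ℕ) : ℝ)) * X ^ (3 * m - n - 1) := by
      rw [Rp_big n (n + 3) (by omega), derivative_sum]
      exact Finset.sum_congr rfl fun m _ => derivative_C_mul_X_pow _ _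
    rw [h2a, derivative_sum]
    refine Finset.sum_congr rfl fun m _ => ?_
    rw [derivative_C_mul_X_pow, show 3 * m - n - 1 - 1 = 3 * m - (n + 2) from by omega]
  have h3 : X * Rp n
      = ∑ m ∈ Finset.range (n + 3),
          (if m = 0 then 0 else C (A n (m - 1)) * X ^ (3 * m - (n + 2))) := by
    conv_rhs => rw [show n + 3 = n + 2 + 1 from by omega]
    rw [Finset.sum_range_succ'
      (fun m => if m = 0 then (0 : Polynomial ℝ) else C (A n (m - 1)) * X ^ (3 * m - (n + 2)))
      (n + 2)]
    simp only [Nat.succ_ne_zero, if_false, if_true, add_zero, Nat.add_sub_cancel]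
    rw [Rp_big n (n + 2) (by omega), Finset.mul_sum]
    refine Finset.sum_congr rfl fun m _ => ?_
    by_cases hnm : n ≤ 3 * m
    · rw [show 3 * (m + 1) - (n + 2) = (3 * m - n) + 1 from by omega]
      ring
    · rw [A_zero (by omega), map_zero, zero_mul, zero_mul, mul_zero]
  rw [h1, h2, h3, Rp_big (n + 2) (n + 3) (by omega), Finset.mul_sum,
    ← Finset.sum_sub_distrib, ← Finset.sum_add_distrib]
  refine Finset.sum_congr rfl fun m _ => ?_
  rw [star n m]
  split_ifs with h
  · simp only [map_add, map_sub, map_mul, map_ofNat, add_zero]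
    ring
  · simp only [map_add, map_sub, map_mul, map_ofNat]
    ring

lemma airyQ_one : airyQ 1 = 1 := by
  have h := airyQ_succ 0
  rw [h, show airyP 0 = 1 from rfl, show airyQ 0 = 0 from rfl]
  simp

lemma airyQ_two : airyQ 2 = 0 := by
  have h := airyQ_succ 1
  show airyQ (1 + 1) = 0
  rw [h, airyQ_one, airyP_succ 0, show airyP 0 = 1 from rfl, show airyQ 0 = 0 from rfl]
  simp

lemma main : ∀ n, airyQ (n + 1) = Rp n := by
  intro n
  induction n using Nat.twoStepInduction with
  | zero =>
    rw [airyQ_one, Rp]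
    rw [Finset.sum_range_one]
    have : A 0 0 = 1 := by
      rw [A_eval (by omega) (by omega) (by omega : 0 - 2 * 0 = 0) (by omega : 3 * 0 - 0 = 0), g0]
      norm_num
    rw [this]
    simp
  | one =>
    show airyQ 2 = Rp 1
    rw [airyQ_two, Rp, Finset.sum_range_succ, Finset.sum_range_one,
      A_zero (by omega : ¬((1 : ℕ) ≤ 3 * 0 ∧ 2 * 0 ≤ 1)),
      A_zero (by omega : ¬((1 : ℕ) ≤ 3 * 1 ∧ 2 * 1 ≤ 1))]
    simp
  | more n ih1 ih2 =>
    have ih2' : airyQ (n + 2) = Rp (n + 1) := ih2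
    show airyQ (n + 3) = Rp (n + 2)
    rw [Qrec n, ih1, ih2', ← Rp_rec n]

end AiryAux

theorem airyQ_explicit (n : ℕ) (x : ℝ) :
    (airyQ (n + 1)).eval x =
      ∑ m ∈ (Finset.range (n + 1)).filter (fun m => n ≤ 3 * m ∧ 2 * m ≤ n),
        gTilde m (n - 2 * m) * (Nat.factorial m : ℝ) * x ^ (3 * m - n) /
          (Nat.factorial (3 * m - n) : ℝ) := by
  rw [AiryAux.main n, AiryAux.Rp, Polynomial.eval_finset_sum, Finset.sum_filter]
  refine Finset.sum_congr rfl fun m hm => ?_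
  rw [Polynomial.eval_mul, Polynomial.eval_C, Polynomial.eval_pow, Polynomial.eval_X]
  by_cases h : n ≤ 3 * m ∧ 2 * m ≤ n
  · rw [if_pos h]
    rw [show AiryAux.A n m = gTilde m (n - 2 * m) * (Nat.factorial m : ℝ)
        / (Nat.factorial (3 * m - n) : ℝ) from if_pos h]
    ring
  · rw [if_neg h, show AiryAux.A n m = 0 from if_neg h, zero_mul]
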